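/- arXiv:cs/0310022 — 3 statements merged into one kernel-verified Lean document; each statement's English description precedes it below -/
import Mathlib

section
/- Let A and B be positive random variables with P[A ≥ x] ≤ α/x for all x > 0 and P[B ≥ x | A] ≤ β/x for all x > 0, where α, β > 0. Then P[AB ≥ x] ≤ (αβ/x)(1 + max(0, ln(x/(αβ)))). -/
open MeasureTheory ProbabilityTheory Real Set

lemma integral_min_tail_bound {Ω : Type*} [MeasurableSpace Ω] (P : Measure Ω)
    [IsProbabilityMeasure P] (A : Ω → ℝ) (hmA : Measurable A) (hApos : ∀ ω, 0 < A ω)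
    (α β x : ℝ) (hα : 0 < α) (hβ : 0 < β) (hx : 0 < x)
    (hA : ∀ y > 0, (P {ω | y ≤ A ω}).toReal ≤ α / y) :
    ∫ ω, min 1 (β * A ω / x) ∂P ≤ (α * β / x) * (1 + max 0 (Real.log (x / (α * β)))) := by
  set c : ℝ := α * β / x with hc
  have hc0 : 0 < c := by positivity
  set Z : Ω → ℝ := fun ω => min 1 (β * A ω / x) with hZ
  have hZ0 : ∀ ω, 0 ≤ Z ω := fun ω => le_min (by norm_num) (div_nonneg (mul_nonneg hβ.le (hApos ω).le) hx.le)
  have hZ1 : ∀ ω, Z ω ≤ 1 := fun ω => min_le_left _ _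
  have hmZ : Measurable Z := measurable_const.min ((hmA.const_mul β).div_const x)
  have hZint : Integrable Z P := by
    refine Integrable.mono' (integrable_const 1) hmZ.aestronglyMeasurable ?_
    exact ae_of_all _ fun ω => by rw [Real.norm_eq_abs, abs_of_nonneg (hZ0 ω)]; exact hZ1 ω
  have hlc := hZint.integral_eq_integral_Ioc_meas_le (M := 1)
      (ae_of_all _ hZ0) (ae_of_all _ hZ1)
  set g : ℝ → ℝ := fun t => (P {ω | t ≤ Z ω}).toReal with hg
  have hganti : Antitone g := fun s t hst =>
    ENNReal.toReal_mono (measure_ne_top _ _) (measure_mono fun ω h => le_trans hst h)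
  have hgm : Measurable g := hganti.measurable
  have hg01 : ∀ t, 0 ≤ g t ∧ g t ≤ 1 := fun t =>
    ⟨ENNReal.toReal_nonneg, by
      rw [hg]; exact ENNReal.toReal_le_of_le_ofReal one_pos.le (by simpa using prob_le_one)⟩
  have hgint : ∀ a b : ℝ, IntegrableOn g (Ioc a b) := by
    intro a b
    refine Integrable.mono' (integrable_const 1) hgm.aestronglyMeasurable ?_
    exact ae_of_all _ fun t => by
      rw [Real.norm_eq_abs, abs_of_nonneg (hg01 t).1]; exact (hg01 t).2
  have hgtail : ∀ t > 0, g t ≤ c / t := by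
    intro t ht
    have hsub : {ω | t ≤ Z ω} ⊆ {ω | t * x / β ≤ A ω} := by
      intro ω hω
      have h2 : t ≤ β * A ω / x := le_trans hω (min_le_right _ _)
      have h3 : t * x ≤ β * A ω := (le_div_iff₀ hx).mp h2
      have : t * x / β ≤ A ω := by rw [div_le_iff₀ hβ]; nlinarith
      exact this
    have := hA (t * x / β) (by positivity)
    calc g t ≤ (P {ω | t * x / β ≤ A ω}).toReal :=
          ENNReal.toReal_mono (measure_ne_top _ _) (measure_mono hsub)
      _ ≤ α / (t * x / β) := this
      _ = c / t := by field_simp [hc]; rw [hc]; field_simp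
  rw [hlc]; change (∫ t in Ioc (0:ℝ) 1, g t) ≤ _
  have hmax : 0 ≤ max 0 (Real.log (x / (α * β))) := le_max_left _ _
  have hconst : ∀ a b : ℝ, ∫ t in Ioc a b, (1:ℝ) ∂volume = (volume (Ioc a b)).toReal := by
    intro a b; simp; rw [ENNReal.toReal_ofReal']
  rcases le_or_gt 1 c with hc1 | hc1
  · have h1 : ∫ t in Ioc (0:ℝ) 1, g t ≤ ∫ t in Ioc (0:ℝ) 1, (1:ℝ) := by
      refine setIntegral_mono_on (hgint 0 1) ?_ measurableSet_Ioc fun t _ => (hg01 t).2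
      exact integrableOn_const (by simp)
    have h2 : ∫ t in Ioc (0:ℝ) 1, (1:ℝ) ∂volume = 1 := by
      rw [hconst]; simp
    nlinarith
  · have hsplit : ∫ t in Ioc (0:ℝ) 1, g t
        = (∫ t in Ioc (0:ℝ) c, g t) + ∫ t in Ioc c 1, g t := by
      rw [← Ioc_union_Ioc_eq_Ioc hc0.le hc1.le]
      exact setIntegral_union (Set.Ioc_disjoint_Ioc_of_le le_rfl) measurableSet_Ioc
        (hgint 0 c) (hgint c 1)
    have hpart1 : ∫ t in Ioc (0:ℝ) c, g t ≤ c := by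
      have h1 : ∫ t in Ioc (0:ℝ) c, g t ≤ ∫ t in Ioc (0:ℝ) c, (1:ℝ) := by
        refine setIntegral_mono_on (hgint 0 c) ?_ measurableSet_Ioc fun t _ => (hg01 t).2
        exact integrableOn_const (by simp)
      rw [hconst] at h1
      simpa [Real.volume_Ioc, hc0.le] using h1
    have hint2 : IntegrableOn (fun t => c / t) (Ioc c 1) volume := by
      refine (ContinuousOn.integrableOn_Icc ?_).mono_set Ioc_subset_Icc_self
      exact continuousOn_const.div continuousOn_id
        fun t ht => ne_of_gt (lt_of_lt_of_le hc0 ht.1)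
    have hpart2 : ∫ t in Ioc c 1, g t ≤ c * Real.log (1 / c) := by
      have h1 : ∫ t in Ioc c 1, g t ≤ ∫ t in Ioc c 1, c / t := by
        refine setIntegral_mono_on (hgint c 1) hint2 measurableSet_Ioc fun t ht => hgtail t (lt_trans hc0 ht.1)
      have h2 : ∫ t in Ioc c 1, c / t = c * Real.log (1 / c) := by
        rw [← intervalIntegral.integral_of_le hc1.le]
        have h0 : (0:ℝ) ∉ Set.uIcc c 1 := by
          rw [Set.uIcc_of_le hc1.le]
          exact fun h => absurd h.1 (not_le.mpr hc0)
        simp only [div_eq_mul_inv, intervalIntegral.integral_const_mul]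
        rw [integral_inv h0]; norm_num
      linarith [h1, h2.le, h2.ge]
    have hlog : Real.log (1 / c) = Real.log (x / (α * β)) := by
      congr 1
      rw [hc]; field_simp
    have hmax2 : max 0 (Real.log (x / (α * β))) = Real.log (1 / c) := by
      rw [← hlog]
      exact max_eq_right (Real.log_nonneg (one_le_one_div hc0 hc1.le))
    rw [hmax2]
    linarith

theorem linear_linear_combination {Ω : Type*} [MeasurableSpace Ω] (P : Measure Ω)
    [IsProbabilityMeasure P] (A B : Ω → ℝ) (hmA : Measurable A) (hmB : Measurable B)
    (hApos : ∀ ω, 0 < A ω) (hBpos : ∀ ω, 0 < B ω)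
    (α β : ℝ) (hα : 0 < α) (hβ : 0 < β)
    (hA : ∀ x > 0, (P {ω | x ≤ A ω}).toReal ≤ α / x)
    (hB : ∀ x > 0, ∀ s, MeasurableSet[MeasurableSpace.comap A inferInstance] s →
      (P (s ∩ {ω | x ≤ B ω})).toReal ≤ (β / x) * (P s).toReal)
    (x : ℝ) (hx : 0 < x) :
    (P {ω | x ≤ A ω * B ω}).toReal ≤
      (α * β / x) * (1 + max 0 (Real.log (x / (α * β)))) := by
  set Z : Ω → ℝ := fun ω => min 1 (β * A ω / x) with hZdef
  have hZ0 : ∀ ω, 0 ≤ Z ω := fun ω =>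
    le_min (by norm_num) (div_nonneg (mul_nonneg hβ.le (hApos ω).le) hx.le)
  have hZ1 : ∀ ω, Z ω ≤ 1 := fun ω => min_le_left _ _
  have hmZ : Measurable Z := measurable_const.min ((hmA.const_mul β).div_const x)
  have hZint : Integrable Z P := by
    refine Integrable.mono' (integrable_const 1) hmZ.aestronglyMeasurable ?_
    exact ae_of_all _ fun ω => by rw [Real.norm_eq_abs, abs_of_nonneg (hZ0 ω)]; exact hZ1 ω
  have hI0 : 0 ≤ ∫ ω, Z ω ∂P := integral_nonneg hZ0
  have key : ∀ r : ℝ, 1 < r →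
      (P {ω | x ≤ A ω * B ω}).toReal ≤ r * ∫ ω, Z ω ∂P := by
    intro r hr
    have hr0 : 0 < r := lt_trans one_pos hr
    set s : ℤ → Set Ω := fun k => A ⁻¹' Set.Ico (r ^ k) (r ^ (k+1)) with hs
    have hsm : ∀ k, MeasurableSet (s k) := fun k => hmA measurableSet_Ico
    have hscm : ∀ k, MeasurableSet[MeasurableSpace.comap A inferInstance] (s k) :=
      fun k => ⟨Set.Ico (r ^ k) (r ^ (k+1)), measurableSet_Ico, rfl⟩
    have hsd : Pairwise (Function.onFun Disjoint s) := by
      have haux : ∀ k l : ℤ, k < l → Disjoint (s k) (s l) := by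
        intro k l hkl
        rw [Set.disjoint_left]
        intro ω h1 h2
        have h3 : r ^ (k+1) ≤ r ^ l := zpow_le_zpow_right₀ hr.le (by omega)
        exact absurd (lt_of_lt_of_le h1.2 h3) (not_lt.mpr h2.1)
      intro k l hkl
      rcases lt_or_gt_of_ne hkl with h | h
      · exact haux k l h
      · exact (haux l k h).symm
    set E : ℤ → Set Ω := fun k => s k ∩ {ω | x / r ^ (k+1) ≤ B ω} with hE
    have hEm : ∀ k, MeasurableSet (E k) :=
      fun k => (hsm k).inter (hmB measurableSet_Ici)
    have hEd : Pairwise (Function.onFun Disjoint E) :=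
      hsd.mono fun k l h => h.mono Set.inter_subset_left Set.inter_subset_left
    have hcov : ∀ ω, ∃ k : ℤ, ω ∈ s k := fun ω => exists_mem_Ico_zpow (hApos ω) hr
    have hsub : {ω | x ≤ A ω * B ω} ⊆ ⋃ k, E k := by
      intro ω hω
      obtain ⟨k, hk⟩ := hcov ω
      refine Set.mem_iUnion.2 ⟨k, hk, ?_⟩
      have h1 : A ω < r ^ (k+1) := hk.2
      have h2 : 0 < r ^ (k+1 : ℤ) := zpow_pos hr0 _
      have h3 : x ≤ A ω * B ω := hω
      rw [Set.mem_setOf_eq, div_le_iff₀ h2]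
      nlinarith [hBpos ω]
    have hm2 : P (⋃ k, E k) = ∑' k, P (E k) := measure_iUnion hEd hEm
    have htop : (∑' k, P (E k)) ≠ ⊤ := by rw [← hm2]; exact measure_ne_top _ _
    have hstep1 : (P {ω | x ≤ A ω * B ω}).toReal ≤ ∑' k, (P (E k)).toReal := by
      rw [← ENNReal.tsum_toReal_eq fun k => measure_ne_top _ _]
      exact ENNReal.toReal_mono htop (hm2 ▸ measure_mono hsub)
    have hterm : ∀ k, (P (E k)).toReal ≤ r * ∫ ω in s k, Z ω ∂P := by
      intro k
      have hrk : (0:ℝ) < r ^ (k:ℤ) := zpow_pos hr0 _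
      have hrk1 : (0:ℝ) < r ^ (k+1:ℤ) := zpow_pos hr0 _
      have hxk : 0 < x / r ^ (k+1:ℤ) := div_pos hx hrk1
      have h1 := hB (x / r ^ (k+1)) hxk (s k) (hscm k)
      have h2 : (P (E k)).toReal ≤ (P (s k)).toReal :=
        ENNReal.toReal_mono (measure_ne_top _ _) (measure_mono Set.inter_subset_left)
      set p := (P (s k)).toReal with hp
      have hp0 : 0 ≤ p := ENNReal.toReal_nonneg
      set w : ℝ := β * r ^ (k:ℤ) / x with hw
      have hw0 : 0 < w := by positivity
      have hwr : β / (x / r ^ (k+1:ℤ)) = r * w := by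
        rw [hw, zpow_add_one₀ hr0.ne']
        field_simp
      rw [hwr] at h1
      have hlow : min 1 w * p ≤ ∫ ω in s k, Z ω ∂P := by
        rw [mul_comm]; refine setIntegral_ge_of_const_le (hsm k) (measure_ne_top _ _) ?_ hZint.integrableOn
        intro ω hω
        refine le_min (min_le_left _ _) (le_trans (min_le_right _ _) ?_)
        have : r ^ (k:ℤ) ≤ A ω := hω.1
        rw [hw]
        gcongr
      rcases le_total 1 w with h | h
      · rw [min_eq_left h] at hlow; nlinarith
      · rw [min_eq_right h] at hlow; nlinarith
    have hsum1 : Summable fun k => (P (E k)).toReal := ENNReal.summable_toReal htop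
    have hUnion : (⋃ k, s k) = Set.univ := Set.eq_univ_of_forall fun ω => Set.mem_iUnion.2 (hcov ω)
    have hHas : HasSum (fun k => ∫ ω in s k, Z ω ∂P) (∫ ω, Z ω ∂P) := by
      have h := hasSum_integral_iUnion hsm hsd (by rw [hUnion]; exact hZint.integrableOn)
      rwa [hUnion, Measure.restrict_univ] at h
    have hsum2 : Summable fun k => r * ∫ ω in s k, Z ω ∂P := hHas.summable.mul_left r
    calc (P {ω | x ≤ A ω * B ω}).toReal ≤ ∑' k, (P (E k)).toReal := hstep1
      _ ≤ ∑' k, r * ∫ ω in s k, Z ω ∂P := Summable.tsum_le_tsum hterm hsum1 hsum2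
      _ = r * ∫ ω, Z ω ∂P := by rw [tsum_mul_left, hHas.tsum_eq]
  have hmain : (P {ω | x ≤ A ω * B ω}).toReal ≤ ∫ ω, Z ω ∂P := by
    refine le_of_forall_pos_le_add fun ε hε => ?_
    have hδ : (0:ℝ) < ε / (∫ ω, Z ω ∂P + 1) := by positivity
    have hkey := key (1 + ε / (∫ ω, Z ω ∂P + 1)) (by linarith)
    have hIle : (1 + ε / (∫ ω, Z ω ∂P + 1)) * ∫ ω, Z ω ∂P ≤ (∫ ω, Z ω ∂P) + ε := by
      have h1 : ε / (∫ ω, Z ω ∂P + 1) * ∫ ω, Z ω ∂P ≤ ε := by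
        rw [div_mul_eq_mul_div, div_le_iff₀ (by linarith)]
        nlinarith
      nlinarith
    linarith
  exact le_trans hmain
    (integral_min_tail_bound P A hmA hApos α β x hα hβ hx hA)
end

section
/- Let A, B, C be positive random variables such that P[A ≥ x] ≤ α/x for some α > 0 and all x > 0, and such that for every value of A, P[B ≥ x | A] ≤ P[C ≥ x] for all x. Then P[AB ≥ x] ≤ (α/x)·E[C]. -/
open MeasureTheory ProbabilityTheory Real

lemma aux_bound {Ω : Type*} [MeasurableSpace Ω] (P : Measure Ω)
    [IsProbabilityMeasure P] (A B C : Ω → ℝ) (hmA : Measurable A) (hmB : Measurable B)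
    (hmC : Measurable C) (hApos : ∀ ω, 0 < A ω) (hBpos : ∀ ω, 0 < B ω)
    (hCpos : ∀ ω, 0 < C ω) (hCint : Integrable C P)
    (α : ℝ) (hα : 0 < α)
    (hA : ∀ x > 0, (P {ω | x ≤ A ω}).toReal ≤ α / x)
    (hB : ∀ x : ℝ, ∀ s, MeasurableSet[MeasurableSpace.comap A inferInstance] s →
      (P (s ∩ {ω | x ≤ B ω})).toReal ≤ (P {ω | x ≤ C ω}).toReal * (P s).toReal)
    (x : ℝ) (hx : 0 < x) (r : ℝ) (hr : 1 < r) :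
    (P {ω | x ≤ A ω * B ω}).toReal ≤ (α * r / x) * ∫ ω, C ω ∂P := by
  have hr0 : 0 < r := lt_trans one_pos hr
  set s : ℤ → Set Ω := fun k => A ⁻¹' Set.Ico (r ^ k) (r ^ (k + 1)) with hs
  have hms : ∀ k, MeasurableSet (s k) := fun k => hmA measurableSet_Ico
  set t : ℤ → ℝ := fun k => x / r ^ (k + 1) with ht
  have hmtC : ∀ k, MeasurableSet {ω | t k ≤ C ω} := fun k =>
    measurableSet_le measurable_const hmC
  set E : Set Ω := {ω | x ≤ A ω * B ω} with hE
  -- Step 1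
  have step1 : P E ≤ ∑' k : ℤ, P (s k ∩ E) := by
    have hcover : (⋃ k : ℤ, s k) = Set.univ := by
      ext ω
      simp only [Set.mem_iUnion, Set.mem_univ, iff_true, hs, Set.mem_preimage]
      exact exists_mem_Ico_zpow (hApos ω) hr
    calc P E = P (⋃ k : ℤ, s k ∩ E) := by
          rw [← Set.iUnion_inter, hcover, Set.univ_inter]
      _ ≤ ∑' k : ℤ, P (s k ∩ E) := measure_iUnion_le _
  -- Step 2
  have step2 : ∀ k : ℤ, P (s k ∩ E) ≤ P {ω | t k ≤ C ω} * P (s k) := by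
    intro k
    have hsub : s k ∩ E ⊆ s k ∩ {ω | t k ≤ B ω} := by
      rintro ω ⟨hωs, hωe⟩
      refine ⟨hωs, ?_⟩
      have h1 : A ω < r ^ (k + 1) := hωs.2
      have h2 : x ≤ A ω * B ω := hωe
      have h3 : x / A ω ≤ B ω := (div_le_iff₀ (hApos ω)).mpr (by linarith [mul_comm (A ω) (B ω)])
      have h4 : x / r ^ (k + 1) ≤ x / A ω := by
        gcongr
        exact hApos ω
      exact le_trans h4 h3
    refine le_trans (measure_mono hsub) ?_
    have h := hB (t k) (s k) ⟨Set.Ico (r ^ k) (r ^ (k + 1)), measurableSet_Ico, rfl⟩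
    rw [← ENNReal.toReal_mul] at h
    exact (ENNReal.toReal_le_toReal (measure_ne_top _ _)
      (ENNReal.mul_ne_top (measure_ne_top _ _) (measure_ne_top _ _))).mp h
  -- Step swap (Fubini)
  have swap : ∑' k : ℤ, P {ω | t k ≤ C ω} * P (s k)
      = ∫⁻ ω, ∑' k : ℤ, ({ω' | t k ≤ C ω'}.indicator (fun _ => P (s k)) ω) ∂P := by
    rw [lintegral_tsum (fun k => (measurable_const.indicator (hmtC k)).aemeasurable)]
    refine tsum_congr fun k => ?_
    rw [lintegral_indicator_const (hmtC k), mul_comm]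
  -- Step 6: pointwise bound
  have step6 : ∀ ω, (∑' k : ℤ, ({ω' | t k ≤ C ω'}.indicator (fun _ => P (s k)) ω))
      ≤ ENNReal.ofReal (α * r * C ω / x) := by
    intro ω
    have hc : 0 < C ω := hCpos ω
    set L := logb r (x / C ω) with hL
    set k0 : ℤ := ⌈L⌉ - 1 with hk0
    have hiff : ∀ k : ℤ, t k ≤ C ω ↔ k0 ≤ k := by
      intro k
      have h1 : t k ≤ C ω ↔ x / C ω ≤ r ^ (k + 1) := by
        rw [ht]
        simp only []
        rw [div_le_iff₀ (zpow_pos hr0 _), div_le_iff₀ hc]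
        constructor <;> intro h <;> linarith [mul_comm (C ω) (r ^ (k + 1))]
      have h2 : x / C ω ≤ r ^ (k + 1) ↔ L ≤ ((k : ℝ) + 1) := by
        rw [← Real.rpow_intCast r (k + 1), ← Real.logb_le_iff_le_rpow hr (div_pos hx hc)]
        push_cast
        rfl
      have h3 : L ≤ (k : ℝ) + 1 ↔ k0 ≤ k := by
        rw [show ((k : ℝ) + 1) = ((k + 1 : ℤ) : ℝ) by push_cast; ring, ← Int.ceil_le, hk0]
        omega
      exact h1.trans (h2.trans h3)
    have indeq : ∀ k : ℤ, ({ω' | t k ≤ C ω'}.indicator (fun _ => P (s k)) ω)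
        = P (if k0 ≤ k then s k else ∅) := by
      intro k
      by_cases hk : k0 ≤ k
      · rw [if_pos hk, Set.indicator_of_mem]
        exact (hiff k).mpr hk
      · rw [if_neg hk, Set.indicator_of_notMem, measure_empty]
        exact fun h => hk ((hiff k).mp h)
    have hdisj_s : Pairwise (Function.onFun Disjoint s) := by
      intro i j hij
      rcases lt_or_gt_of_ne hij with h | h
      all_goals {
        rw [Function.onFun, Set.disjoint_left]
        intro ω' hi hj
        have hi1 : r ^ i ≤ A ω' := hi.1
        have hi2 : A ω' < r ^ (i + 1) := hi.2
        have hj1 : r ^ j ≤ A ω' := hj.1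
        have hj2 : A ω' < r ^ (j + 1) := hj.2
        first
        | · have : r ^ (i + 1) ≤ r ^ j := zpow_le_zpow_right₀ hr.le (by omega)
            linarith
        | · have : r ^ (j + 1) ≤ r ^ i := zpow_le_zpow_right₀ hr.le (by omega)
            linarith
      }
    calc ∑' k : ℤ, ({ω' | t k ≤ C ω'}.indicator (fun _ => P (s k)) ω)
        = ∑' k : ℤ, P (if k0 ≤ k then s k else ∅) := tsum_congr indeq
      _ = P (⋃ k : ℤ, if k0 ≤ k then s k else ∅) := by
          refine (measure_iUnion ?_ ?_).symm
          · intro i j hij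
            have := hdisj_s hij
            dsimp only [Function.onFun] at this ⊢
            split_ifs <;> simp [this]
          · intro k
            split_ifs
            · exact hms k
            · exact MeasurableSet.empty
      _ ≤ P {ω' | r ^ k0 ≤ A ω'} := by
          refine measure_mono (Set.iUnion_subset fun k => ?_)
          split_ifs with hk
          · intro ω' hω'
            exact le_trans (zpow_le_zpow_right₀ hr.le hk) hω'.1
          · exact Set.empty_subset _
      _ ≤ ENNReal.ofReal (α / r ^ k0) := by
          rw [ENNReal.le_ofReal_iff_toReal_le (measure_ne_top _ _) (by positivity)]
          exact hA _ (zpow_pos hr0 _)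
      _ ≤ ENNReal.ofReal (α * r * C ω / x) := by
          refine ENNReal.ofReal_le_ofReal ?_
          have h4 : (r : ℝ) ^ (-k0) ≤ r * C ω / x := by
            have hexp : ((-k0 : ℤ) : ℝ) ≤ 1 - L := by
              rw [hk0]
              push_cast
              linarith [Int.le_ceil L]
            calc r ^ (-k0) = r ^ ((-k0 : ℤ) : ℝ) := (Real.rpow_intCast r _).symm
              _ ≤ r ^ (1 - L) := Real.rpow_le_rpow_of_exponent_le hr.le hexp
              _ = r / (x / C ω) := by
                  rw [Real.rpow_sub hr0, Real.rpow_one, hL,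
                    Real.rpow_logb hr0 hr.ne' (div_pos hx hc)]
              _ = r * C ω / x := by
                  field_simp
          calc α / r ^ k0 = α * r ^ (-k0) := by
                rw [zpow_neg, div_eq_mul_inv]
            _ ≤ α * (r * C ω / x) := mul_le_mul_of_nonneg_left h4 hα.le
            _ = α * r * C ω / x := by ring
  -- Step 7
  have step7 : ∫⁻ ω, ENNReal.ofReal (α * r * C ω / x) ∂P
      = ENNReal.ofReal ((α * r / x) * ∫ ω, C ω ∂P) := by
    have heq : ∀ ω, ENNReal.ofReal (α * r * C ω / x)
        = ENNReal.ofReal (α * r / x) * ENNReal.ofReal (C ω) := by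
      intro ω
      rw [← ENNReal.ofReal_mul (by positivity)]
      ring_nf
    simp_rw [heq]
    rw [lintegral_const_mul' _ _ ENNReal.ofReal_ne_top,
      ← ofReal_integral_eq_lintegral_ofReal hCint
        (Filter.Eventually.of_forall fun ω => (hCpos ω).le),
      ← ENNReal.ofReal_mul (by positivity)]
  -- Assemble
  have chain : P E ≤ ENNReal.ofReal ((α * r / x) * ∫ ω, C ω ∂P) := by
    calc P E ≤ ∑' k : ℤ, P (s k ∩ E) := step1
      _ ≤ ∑' k : ℤ, P {ω | t k ≤ C ω} * P (s k) := ENNReal.tsum_le_tsum step2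
      _ = ∫⁻ ω, ∑' k : ℤ, ({ω' | t k ≤ C ω'}.indicator (fun _ => P (s k)) ω) ∂P := swap
      _ ≤ ∫⁻ ω, ENNReal.ofReal (α * r * C ω / x) ∂P := lintegral_mono step6
      _ = ENNReal.ofReal ((α * r / x) * ∫ ω, C ω ∂P) := step7
  have hInn : 0 ≤ ∫ ω, C ω ∂P := integral_nonneg fun ω => (hCpos ω).le
  exact ENNReal.toReal_le_of_le_ofReal (by positivity) chain

theorem linear_bounded_expectation {Ω : Type*} [MeasurableSpace Ω] (P : Measure Ω)
    [IsProbabilityMeasure P] (A B C : Ω → ℝ) (hmA : Measurable A) (hmB : Measurable B)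
    (hmC : Measurable C) (hApos : ∀ ω, 0 < A ω) (hBpos : ∀ ω, 0 < B ω)
    (hCpos : ∀ ω, 0 < C ω) (hCint : Integrable C P)
    (α : ℝ) (hα : 0 < α)
    (hA : ∀ x > 0, (P {ω | x ≤ A ω}).toReal ≤ α / x)
    (hB : ∀ x : ℝ, ∀ s, MeasurableSet[MeasurableSpace.comap A inferInstance] s →
      (P (s ∩ {ω | x ≤ B ω})).toReal ≤ (P {ω | x ≤ C ω}).toReal * (P s).toReal)
    (x : ℝ) (hx : 0 < x) :
    (P {ω | x ≤ A ω * B ω}).toReal ≤ (α / x) * ∫ ω, C ω ∂P := by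
  have key := aux_bound P A B C hmA hmB hmC hApos hBpos hCpos hCint α hα hA hB x hx
  have hInn : 0 ≤ ∫ ω, C ω ∂P := integral_nonneg fun ω => (hCpos ω).le
  rcases hInn.eq_or_lt with h0 | hpos
  · have h := key 2 one_lt_two
    rw [← h0] at h ⊢
    simpa using h
  · refine le_of_forall_pos_le_add fun ε hε => ?_
    set I := ∫ ω, C ω ∂P with hI
    have hr : 1 < 1 + ε * x / (α * I) := by
      have : 0 < ε * x / (α * I) := by positivity
      linarith
    have h := key _ hr
    calc (P {ω | x ≤ A ω * B ω}).toReal ≤ (α * (1 + ε * x / (α * I)) / x) * I := h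
      _ = α / x * I + ε := by
          field_simp
end

section
/- Let Ā be an arbitrary n×n symmetric real matrix, and let G be a Gaussian random variable of mean 0 and variance σ²/n. Let A = Ā + G·I. Then P[‖A⁻¹‖₂ ≥ x] ≤ √(2/π) · n^{3/2}/(xσ). -/
open MeasureTheory ProbabilityTheory Real

lemma aux_diag_norm {n : ℕ} (d : Fin n → ℝ) (c : ℝ) (hc : 0 ≤ c) (h : ∀ i, |d i| ≤ c) :
    ‖Matrix.toEuclideanCLM (𝕜 := ℝ) (Matrix.diagonal d)‖ ≤ c := by
  refine ContinuousLinearMap.opNorm_le_bound _ hc fun v => ?_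
  have hv : ∀ i, (Matrix.toEuclideanCLM (𝕜 := ℝ) (Matrix.diagonal d) v) i = d i * v i := by
    intro i
    have h2 := congrFun (Matrix.ofLp_toEuclideanCLM (𝕜 := ℝ) (Matrix.diagonal d) v) i
    simpa [Matrix.mulVec_diagonal] using h2
  rw [EuclideanSpace.norm_eq, EuclideanSpace.norm_eq, ← Real.sqrt_sq hc,
    ← Real.sqrt_mul (by positivity)]
  apply Real.sqrt_le_sqrt
  rw [Finset.mul_sum]
  refine Finset.sum_le_sum fun i _ => ?_
  rw [hv i]
  have h1 : ‖d i * v i‖ = |d i| * ‖v i‖ := by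
    rw [norm_mul]; rfl
  rw [h1, mul_pow]
  exact mul_le_mul_of_nonneg_right (pow_le_pow_left₀ (abs_nonneg _) (h i) 2) (by positivity)

lemma aux_key {n : ℕ} (hn : n ≠ 0) (Abar : Matrix (Fin n) (Fin n) ℝ)
    (hA : Abar.IsHermitian) (g x : ℝ) (hx : 0 < x)
    (h : ∀ i, 1 / x < |hA.eigenvalues i + g|) :
    ‖Matrix.toEuclideanCLM (𝕜 := ℝ) ((Abar + g • (1 : Matrix (Fin n) (Fin n) ℝ))⁻¹)‖ < x := by
  haveI : Nonempty (Fin n) := Fin.pos_iff_nonempty.mp (Nat.pos_of_ne_zero hn)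
  set U : Matrix (Fin n) (Fin n) ℝ := (hA.eigenvectorUnitary : Matrix (Fin n) (Fin n) ℝ) with hUdef
  have hU1 : star U * U = 1 := Unitary.coe_star_mul_self _
  have hU2 : U * star U = 1 := Unitary.coe_mul_star_self _
  set lam : Fin n → ℝ := hA.eigenvalues with hlam
  have hnz : ∀ i, lam i + g ≠ 0 := fun i => by
    have := h i
    intro h0
    have hxpos : (0:ℝ) < 1 / x := by positivity
    rw [h0, abs_zero] at this
    linarith
  have hspec : Abar + g • (1 : Matrix (Fin n) (Fin n) ℝ) =
      U * Matrix.diagonal (fun i => lam i + g) * star U := by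
    have h1 := hA.spectral_theorem
    rw [RCLike.ofReal_real_eq_id] at h1
    have h2 : (Matrix.diagonal (fun i => lam i + g)) =
        Matrix.diagonal lam + g • (1 : Matrix (Fin n) (Fin n) ℝ) := by
      ext i j
      by_cases hij : i = j
      · subst hij
        simp [Matrix.diagonal_apply_eq, Matrix.smul_apply, Matrix.one_apply_eq]
      · simp [Matrix.diagonal_apply_ne _ hij, Matrix.smul_apply, Matrix.one_apply_ne hij]
    rw [h2, Matrix.mul_add, Matrix.add_mul, Matrix.mul_smul, Matrix.mul_one, Matrix.smul_mul, hU2]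
    congr 1
  have hinv : (Abar + g • (1 : Matrix (Fin n) (Fin n) ℝ))⁻¹ =
      U * Matrix.diagonal (fun i => (lam i + g)⁻¹) * star U := by
    apply Matrix.inv_eq_right_inv
    rw [hspec]
    calc U * Matrix.diagonal (fun i => lam i + g) * star U *
          (U * Matrix.diagonal (fun i => (lam i + g)⁻¹) * star U)
        = U * Matrix.diagonal (fun i => lam i + g) * (star U * U) *
          Matrix.diagonal (fun i => (lam i + g)⁻¹) * star U := by
          simp only [Matrix.mul_assoc]
      _ = 1 := by
          rw [hU1, Matrix.mul_one, Matrix.mul_assoc U, Matrix.diagonal_mul_diagonal]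
          have : (fun i => (lam i + g) * (lam i + g)⁻¹) = fun _ => (1 : ℝ) := by
            funext i; exact mul_inv_cancel₀ (hnz i)
          rw [this, Matrix.diagonal_one, Matrix.mul_one, hU2]
  -- choose the max
  set c : ℝ := Finset.univ.sup' (Finset.univ_nonempty) (fun i => |(lam i + g)⁻¹|) with hc
  have hcx : c < x := by
    rw [hc, Finset.sup'_lt_iff]
    intro i _
    rw [abs_inv]
    have hpos : 0 < |lam i + g| := abs_pos.mpr (hnz i)
    exact (inv_lt_comm₀ hpos hx).mpr (by rw [← one_div]; exact h i)
  have hc0 : 0 ≤ c := le_trans (abs_nonneg ((lam (Classical.arbitrary (Fin n)) + g)⁻¹))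
    (Finset.le_sup' (fun i => |(lam i + g)⁻¹|) (Finset.mem_univ _))
  refine lt_of_le_of_lt ?_ hcx
  rw [hinv]
  -- unitary invariance of the norm
  haveI : Nontrivial (EuclideanSpace ℝ (Fin n) →L[ℝ] EuclideanSpace ℝ (Fin n)) := by
    refine ⟨1, 0, fun hcon => ?_⟩
    have h0 := congrFun (congrArg DFunLike.coe hcon)
      (EuclideanSpace.single (Classical.arbitrary (Fin n)) (1:ℝ))
    simp only [ContinuousLinearMap.one_apply, ContinuousLinearMap.zero_apply] at h0
    have h3 := congrFun (congrArg (fun v : EuclideanSpace ℝ (Fin n) => (v : Fin n → ℝ)) h0)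
      (Classical.arbitrary (Fin n))
    simp [EuclideanSpace.single_apply] at h3
  have hUmem : (Matrix.toEuclideanCLM (𝕜 := ℝ) U) ∈
      unitary (EuclideanSpace ℝ (Fin n) →L[ℝ] EuclideanSpace ℝ (Fin n)) := by
    constructor
    · rw [← map_star, ← map_mul, hU1, map_one]
    · rw [← map_star, ← map_mul, hU2, map_one]
  rw [map_mul, map_mul, map_star]
  rw [CStarRing.norm_mul_mem_unitary _ (Unitary.star_mem hUmem),
    CStarRing.norm_mem_unitary_mul _ hUmem]
  exact aux_diag_norm _ c hc0 (fun i => Finset.le_sup' (fun i => |(lam i + g)⁻¹|) (Finset.mem_univ i))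

theorem symmetric_diagonal_perturbation_inverse_norm {Ω : Type*} [MeasurableSpace Ω]
    (P : Measure Ω) [IsProbabilityMeasure P] (n : ℕ) (σ : ℝ) (hσ : 0 < σ)
    (Abar : Matrix (Fin n) (Fin n) ℝ) (hsym : Abar.IsSymm)
    (G : Ω → ℝ) (hG : Measure.map G P = gaussianReal 0 (Real.toNNReal (σ ^ 2 / n)))
    (x : ℝ) (hx : 0 < x) :
    (P {ω | x ≤
        ‖Matrix.toEuclideanCLM (𝕜 := ℝ)
          ((Abar + G ω • (1 : Matrix (Fin n) (Fin n) ℝ))⁻¹)‖}).toReal ≤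
      Real.sqrt (2 / π) * (n : ℝ) ^ ((3 : ℝ) / 2) / (x * σ) := by
  rcases Nat.eq_zero_or_pos n with hn | hn
  · subst hn
    have hempty : {ω | x ≤ ‖Matrix.toEuclideanCLM (𝕜 := ℝ)
        ((Abar + G ω • (1 : Matrix (Fin 0) (Fin 0) ℝ))⁻¹)‖} = ∅ := by
      ext ω
      simp only [Set.mem_setOf_eq, Set.mem_empty_iff_false, iff_false, not_le]
      have h0 : (Matrix.toEuclideanCLM (𝕜 := ℝ) ((Abar + G ω • (1 : Matrix (Fin 0) (Fin 0) ℝ))⁻¹)) = 0 :=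
        Subsingleton.elim _ _
      rw [h0, norm_zero]
      exact hx
    rw [hempty, measure_empty]
    rw [Nat.cast_zero, Real.zero_rpow (by norm_num)]
    simp
  · have hA : Abar.IsHermitian := by
      rw [Matrix.IsHermitian, Matrix.conjTranspose_eq_transpose_of_trivial]
      exact hsym
    set lam : Fin n → ℝ := hA.eigenvalues with hlam
    have hGm : AEMeasurable G P := by
      by_contra hc
      rw [Measure.map_of_not_aemeasurable hc] at hG
      have h1 : (gaussianReal 0 (Real.toNNReal (σ^2/n))) Set.univ = 1 := measure_univ
      rw [← hG] at h1
      simp at h1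
    set v : NNReal := Real.toNNReal (σ^2/n) with hv
    have hvR : (v : ℝ) = σ^2/n := Real.coe_toNNReal _ (by positivity)
    have hv0 : v ≠ 0 := by
      intro h0
      have h2 : (0:ℝ) < σ^2/n := by positivity
      rw [h0] at hvR
      simp at hvR
      rw [← hvR] at h2
      exact lt_irrefl _ h2
    have hsub : {ω | x ≤ ‖Matrix.toEuclideanCLM (𝕜 := ℝ)
          ((Abar + G ω • (1 : Matrix (Fin n) (Fin n) ℝ))⁻¹)‖} ⊆
        ⋃ i, G ⁻¹' (Set.Icc (-lam i - 1/x) (-lam i + 1/x)) := by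
      intro ω hω
      by_contra hc
      simp only [Set.mem_iUnion, not_exists, Set.mem_preimage, Set.mem_Icc, not_and_or,
        not_le] at hc
      have hall : ∀ i, 1/x < |lam i + G ω| := by
        intro i
        rcases hc i with h1 | h1
        · calc 1/x < -(lam i + G ω) := by linarith
            _ ≤ |lam i + G ω| := neg_le_abs _
        · calc 1/x < lam i + G ω := by linarith
            _ ≤ |lam i + G ω| := le_abs_self _
      exact absurd hω (not_le.mpr (aux_key hn.ne' Abar hA (G ω) x hx hall))
    set c0 : ℝ := (Real.sqrt (2*π*v))⁻¹ * (2/x) with hc0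
    have hB : ∀ i : Fin n, P (G ⁻¹' (Set.Icc (-lam i - 1/x) (-lam i + 1/x))) ≤
        ENNReal.ofReal c0 := by
      intro i
      rw [← Measure.map_apply_of_aemeasurable hGm measurableSet_Icc, hG,
        gaussianReal_apply 0 hv0]
      calc ∫⁻ y in Set.Icc (-lam i - 1/x) (-lam i + 1/x), gaussianPDF 0 v y
          ≤ ∫⁻ _ in Set.Icc (-lam i - 1/x) (-lam i + 1/x),
            ENNReal.ofReal ((Real.sqrt (2*π*v))⁻¹) := by
            apply lintegral_mono
            intro y
            apply ENNReal.ofReal_le_ofReal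
            rw [gaussianPDFReal]
            calc (Real.sqrt (2*π*v))⁻¹ * rexp (-(y - 0)^2/(2*v)) ≤
                (Real.sqrt (2*π*v))⁻¹ * 1 := by
                  apply mul_le_mul_of_nonneg_left _ (by positivity)
                  apply Real.exp_le_one_iff.mpr
                  have hvpos : (0:ℝ) < v := by
                    rw [hvR]; positivity
                  apply div_nonpos_of_nonpos_of_nonneg
                  · simp [neg_nonpos, sq_nonneg]
                  · linarith
              _ = (Real.sqrt (2*π*v))⁻¹ := mul_one _
        _ = ENNReal.ofReal ((Real.sqrt (2*π*v))⁻¹) *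
            volume (Set.Icc (-lam i - 1/x) (-lam i + 1/x)) := setLIntegral_const _ _
        _ ≤ ENNReal.ofReal ((Real.sqrt (2*π*v))⁻¹) * ENNReal.ofReal (2/x) := by
            rw [Real.volume_Icc]
            apply mul_le_mul_right
            apply ENNReal.ofReal_le_ofReal
            apply le_of_eq
            ring
        _ = ENNReal.ofReal c0 := by
            rw [hc0, ENNReal.ofReal_mul (by positivity)]
    have htotal : P {ω | x ≤ ‖Matrix.toEuclideanCLM (𝕜 := ℝ)
          ((Abar + G ω • (1 : Matrix (Fin n) (Fin n) ℝ))⁻¹)‖} ≤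
        ENNReal.ofReal (n * c0) := by
      calc P _ ≤ P (⋃ i, G ⁻¹' (Set.Icc (-lam i - 1/x) (-lam i + 1/x))) := measure_mono hsub
        _ ≤ ∑' i, P (G ⁻¹' (Set.Icc (-lam i - 1/x) (-lam i + 1/x))) := measure_iUnion_le _
        _ = ∑ i, P (G ⁻¹' (Set.Icc (-lam i - 1/x) (-lam i + 1/x))) := tsum_fintype _
        _ ≤ ∑ _i : Fin n, ENNReal.ofReal c0 := Finset.sum_le_sum fun i _ => hB i
        _ = n * ENNReal.ofReal c0 := by
            rw [Finset.sum_const, Finset.card_univ, Fintype.card_fin, nsmul_eq_mul]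
        _ = ENNReal.ofReal (n * c0) := by
            rw [hc0, ENNReal.ofReal_mul (by positivity : (0:ℝ) ≤ (n:ℝ)),
              ENNReal.ofReal_mul (by positivity), ENNReal.ofReal_natCast]
    refine le_trans (ENNReal.toReal_mono ENNReal.ofReal_ne_top htotal) ?_
    rw [ENNReal.toReal_ofReal (by positivity)]
    rw [hc0, hvR]
    have hπ := Real.pi_pos
    have hnpos : (0:ℝ) < n := Nat.cast_pos.mpr hn
    have hsq : Real.sqrt (2*π*(σ^2/n)) = Real.sqrt (2*π) * σ / Real.sqrt n := by
      rw [show 2*π*(σ^2/(n:ℝ)) = (2*π)*σ^2/n by ring, Real.sqrt_div (by positivity),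
        Real.sqrt_mul (by positivity), Real.sqrt_sq hσ.le]
    have hn32 : (n:ℝ) ^ ((3:ℝ)/2) = n * Real.sqrt n := by
      rw [show (3:ℝ)/2 = 1 + 1/2 by norm_num, Real.rpow_add hnpos, Real.rpow_one,
        ← Real.sqrt_eq_rpow]
    have hkey : Real.sqrt (2/π) * Real.sqrt (2*π) = 2 := by
      rw [← Real.sqrt_mul (by positivity), show 2/π*(2*π) = 4 by field_simp; ring,
        show (4:ℝ) = 2^2 by norm_num, Real.sqrt_sq (by norm_num)]
    rw [hsq, hn32]
    have hs2π : 0 < Real.sqrt (2*π) := Real.sqrt_pos.mpr (by positivity)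
    have hsn : 0 < Real.sqrt n := Real.sqrt_pos.mpr hnpos
    have h2' : Real.sqrt (2/π) = 2 / Real.sqrt (2*π) := by
      rw [eq_div_iff hs2π.ne']
      exact hkey
    rw [h2']
    apply le_of_eq
    field_simp
end
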